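/- Let α₀ ∈ (0,1) be irrational and β₀ ∈ [−1, α₀), with the Ostrowski data (α_n, a_n, β_n, b_n, α^{(n)}, x^{(n)}) defined by the recursions in the context. Then for every n ≥ 0, |β₀ − Σ_{k=0}^{n} x^{(k)}| = α^{(n)}·|β_{n+1}|, and consequently the series Σ_{n=0}^{∞} x^{(n)} converges to β₀. -/

import Mathlib

open scoped BigOperators

/-- The Gauss map `G(x) = 1/x − ⌊1/x⌋`. -/
noncomputable def gaussMap (x : ℝ) : ℝ := 1 / x - ⌊1 / x⌋

/-- `α_n = Gⁿ(α₀)`. -/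
noncomputable def alphaSeq (α₀ : ℝ) (n : ℕ) : ℝ := gaussMap^[n] α₀

/-- `a_n = ⌊1/α_n⌋`. -/
noncomputable def aSeq (α₀ : ℝ) (n : ℕ) : ℤ := ⌊1 / alphaSeq α₀ n⌋

/-- The sequence `β_n` of the Ostrowski algorithm: `β₀` is given, and
if `β_n ∈ [−1, −1 + a_n·α_n)` then `β_{n+1} = −{(β_n+1)/α_n}`, while otherwise
(i.e. if `β_n ∈ [−1 + a_n·α_n, α_n)`) `β_{n+1} = −β_n/α_n`. -/
noncomputable def betaSeq (α₀ β₀ : ℝ) : ℕ → ℝ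
  | 0 => β₀
  | n + 1 =>
      if betaSeq α₀ β₀ n < -1 + (aSeq α₀ n : ℝ) * alphaSeq α₀ n then
        -((betaSeq α₀ β₀ n + 1) / alphaSeq α₀ n - ⌊(betaSeq α₀ β₀ n + 1) / alphaSeq α₀ n⌋)
      else -(betaSeq α₀ β₀ n / alphaSeq α₀ n)

/-- The Ostrowski digits `b_n`: `b_n = ⌊(1+β_n)/α_n⌋ + 1` if `β_n ∈ [−1, −1 + a_n·α_n)`
and `b_n = 0` otherwise. -/
noncomputable def bSeq (α₀ β₀ : ℝ) (n : ℕ) : ℤ :=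
  if betaSeq α₀ β₀ n < -1 + (aSeq α₀ n : ℝ) * alphaSeq α₀ n then
    ⌊(1 + betaSeq α₀ β₀ n) / alphaSeq α₀ n⌋ + 1
  else 0

/-- `alphaProd α₀ n = α^{(n−1)} = α₀·α₁·⋯·α_{n−1}` (so `alphaProd α₀ 0 = α^{(−1)} = 1`
and `α^{(n)} = alphaProd α₀ (n+1)`). -/
noncomputable def alphaProd (α₀ : ℝ) (n : ℕ) : ℝ := ∏ k ∈ Finset.range n, alphaSeq α₀ k

/-- The Ostrowski summands `x^{(n)} = (−1)ⁿ·α^{(n−1)}·(−1 + (b_n−1)·α_n)` if `b_n ≥ 1`,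
and `x^{(n)} = 0` if `b_n = 0`. -/
noncomputable def xSeq (α₀ β₀ : ℝ) (n : ℕ) : ℝ :=
  if 1 ≤ bSeq α₀ β₀ n then
    (-1 : ℝ) ^ n * alphaProd α₀ n * (-1 + ((bSeq α₀ β₀ n : ℝ) - 1) * alphaSeq α₀ n)
  else 0

lemma alphaSeq_succ (α₀ : ℝ) (n : ℕ) :
    alphaSeq α₀ (n + 1) = 1 / alphaSeq α₀ n - (aSeq α₀ n : ℝ) := by
  simp only [alphaSeq, Function.iterate_succ_apply']
  rfl

lemma alpha_props (α₀ : ℝ) (hα : α₀ ∈ Set.Ioo (0 : ℝ) 1) (hirr : Irrational α₀) :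
    ∀ n, Irrational (alphaSeq α₀ n) ∧ alphaSeq α₀ n ∈ Set.Ioo (0 : ℝ) 1 := by
  intro n
  induction n with
  | zero => exact ⟨hirr, hα⟩
  | succ n ih =>
    obtain ⟨hi, h0, h1⟩ := ih
    have hinv : Irrational (1 / alphaSeq α₀ n) := by
      rw [one_div]; exact hi.inv
    have hfr : Irrational (Int.fract (1 / alphaSeq α₀ n)) := by
      unfold Int.fract; exact hinv.sub_intCast _
    have heq : alphaSeq α₀ (n + 1) = Int.fract (1 / alphaSeq α₀ n) := by
      rw [alphaSeq_succ]; rfl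
    refine ⟨heq ▸ hfr, ?_, ?_⟩
    · rw [heq]
      exact lt_of_le_of_ne (Int.fract_nonneg _) (Ne.symm hfr.ne_zero)
    · rw [heq]; exact Int.fract_lt_one _

lemma aSeq_ge_one (α₀ : ℝ) (hα : α₀ ∈ Set.Ioo (0 : ℝ) 1) (hirr : Irrational α₀) (n : ℕ) :
    1 ≤ aSeq α₀ n := by
  obtain ⟨-, h0, h1⟩ := alpha_props α₀ hα hirr n
  have : (1 : ℝ) ≤ 1 / alphaSeq α₀ n := by
    rw [le_div_iff₀ h0]; linarith
  exact Int.le_floor.mpr (by exact_mod_cast this)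

lemma beta_props (α₀ β₀ : ℝ) (hα : α₀ ∈ Set.Ioo (0 : ℝ) 1) (hirr : Irrational α₀)
    (hβ : β₀ ∈ Set.Ico (-1 : ℝ) α₀) :
    ∀ n, -1 ≤ betaSeq α₀ β₀ n ∧ betaSeq α₀ β₀ n ≤ alphaSeq α₀ n := by
  intro n
  induction n with
  | zero => exact ⟨hβ.1, le_of_lt hβ.2⟩
  | succ n ih =>
    obtain ⟨hl, hu⟩ := ih
    obtain ⟨-, h0, h1⟩ := alpha_props α₀ hα hirr n
    obtain ⟨-, h0', h1'⟩ := alpha_props α₀ hα hirr (n + 1)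
    have hne : alphaSeq α₀ n ≠ 0 := ne_of_gt h0
    rw [show betaSeq α₀ β₀ (n+1) =
      if betaSeq α₀ β₀ n < -1 + (aSeq α₀ n : ℝ) * alphaSeq α₀ n then
        -((betaSeq α₀ β₀ n + 1) / alphaSeq α₀ n - ⌊(betaSeq α₀ β₀ n + 1) / alphaSeq α₀ n⌋)
      else -(betaSeq α₀ β₀ n / alphaSeq α₀ n) from rfl]
    by_cases h : betaSeq α₀ β₀ n < -1 + (aSeq α₀ n : ℝ) * alphaSeq α₀ n
    · rw [if_pos h]
      have hlt := Int.fract_lt_one ((betaSeq α₀ β₀ n + 1) / alphaSeq α₀ n)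
      have hge := Int.fract_nonneg ((betaSeq α₀ β₀ n + 1) / alphaSeq α₀ n)
      unfold Int.fract at hlt hge
      constructor
      · linarith
      · linarith
    · rw [if_neg h]
      push_neg at h
      constructor
      · have : betaSeq α₀ β₀ n / alphaSeq α₀ n ≤ 1 := by
          rw [div_le_one h0]; linarith
        linarith
      · rw [alphaSeq_succ]
        have e1 : -(betaSeq α₀ β₀ n / alphaSeq α₀ n) = (-(betaSeq α₀ β₀ n)) / alphaSeq α₀ n := by
          ring
        rw [e1, div_le_iff₀ h0]
        have e2 : (1 / alphaSeq α₀ n - (aSeq α₀ n : ℝ)) * alphaSeq α₀ n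
            = 1 - (aSeq α₀ n : ℝ) * alphaSeq α₀ n := by
          field_simp
        rw [e2]
        linarith

lemma key_identity (α₀ β₀ : ℝ) (hα : α₀ ∈ Set.Ioo (0 : ℝ) 1) (hirr : Irrational α₀)
    (hβ : β₀ ∈ Set.Ico (-1 : ℝ) α₀) :
    ∀ n, β₀ - ∑ k ∈ Finset.range n, xSeq α₀ β₀ k
      = (-1 : ℝ) ^ n * alphaProd α₀ n * betaSeq α₀ β₀ n := by
  intro n
  induction n with
  | zero => simp [alphaProd, betaSeq]
  | succ n ih =>
    obtain ⟨-, h0, h1⟩ := alpha_props α₀ hα hirr n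
    obtain ⟨hbl, hbu⟩ := beta_props α₀ β₀ hα hirr hβ n
    have hne : alphaSeq α₀ n ≠ 0 := ne_of_gt h0
    rw [Finset.sum_range_succ, show β₀ - (∑ k ∈ Finset.range n, xSeq α₀ β₀ k + xSeq α₀ β₀ n)
      = (β₀ - ∑ k ∈ Finset.range n, xSeq α₀ β₀ k) - xSeq α₀ β₀ n by ring, ih]
    have hP : alphaProd α₀ (n + 1) = alphaProd α₀ n * alphaSeq α₀ n :=
      Finset.prod_range_succ _ _
    have hB : betaSeq α₀ β₀ (n+1) =
      if betaSeq α₀ β₀ n < -1 + (aSeq α₀ n : ℝ) * alphaSeq α₀ n then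
        -((betaSeq α₀ β₀ n + 1) / alphaSeq α₀ n - ⌊(betaSeq α₀ β₀ n + 1) / alphaSeq α₀ n⌋)
      else -(betaSeq α₀ β₀ n / alphaSeq α₀ n) := rfl
    by_cases h : betaSeq α₀ β₀ n < -1 + (aSeq α₀ n : ℝ) * alphaSeq α₀ n
    · have hb : bSeq α₀ β₀ n = ⌊(1 + betaSeq α₀ β₀ n) / alphaSeq α₀ n⌋ + 1 := if_pos h
      have hfl : (0 : ℤ) ≤ ⌊(1 + betaSeq α₀ β₀ n) / alphaSeq α₀ n⌋ :=
        Int.floor_nonneg.mpr (div_nonneg (by linarith) (le_of_lt h0))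
      have hb1 : 1 ≤ bSeq α₀ β₀ n := by omega
      have hx : xSeq α₀ β₀ n
          = (-1 : ℝ) ^ n * alphaProd α₀ n * (-1 + ((bSeq α₀ β₀ n : ℝ) - 1) * alphaSeq α₀ n) :=
        if_pos hb1
      have hcm : (1 : ℝ) + betaSeq α₀ β₀ n = betaSeq α₀ β₀ n + 1 := by ring
      rw [hx, hB, if_pos h, hP, hb]
      push_cast
      rw [hcm]
      field_simp
      ring
    · have hb : bSeq α₀ β₀ n = 0 := if_neg h
      have hx : xSeq α₀ β₀ n = 0 := by
        rw [xSeq, hb]; norm_num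
      rw [hx, hB, if_neg h, hP]
      field_simp
      ring

lemma alphaProd_pos (α₀ : ℝ) (hα : α₀ ∈ Set.Ioo (0 : ℝ) 1) (hirr : Irrational α₀) (n : ℕ) :
    0 < alphaProd α₀ n :=
  Finset.prod_pos (fun k _ => (alpha_props α₀ hα hirr k).2.1)

lemma alphaProd_anti (α₀ : ℝ) (hα : α₀ ∈ Set.Ioo (0 : ℝ) 1) (hirr : Irrational α₀) :
    Antitone (alphaProd α₀) := by
  apply antitone_nat_of_succ_le
  intro n
  have h := alpha_props α₀ hα hirr n
  have hp := alphaProd_pos α₀ hα hirr n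
  calc alphaProd α₀ (n+1) = alphaProd α₀ n * alphaSeq α₀ n := Finset.prod_range_succ _ _
    _ ≤ alphaProd α₀ n := by nlinarith [h.2.1, h.2.2]

lemma pair_bound (α₀ : ℝ) (hα : α₀ ∈ Set.Ioo (0 : ℝ) 1) (hirr : Irrational α₀) (n : ℕ) :
    alphaSeq α₀ n * alphaSeq α₀ (n + 1) ≤ 1 / 2 := by
  obtain ⟨-, h0, h1⟩ := alpha_props α₀ hα hirr n
  obtain ⟨-, h0', h1'⟩ := alpha_props α₀ hα hirr (n + 1)
  by_cases h : alphaSeq α₀ n ≤ 1 / 2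
  · nlinarith
  · push_neg at h
    have ha1 : aSeq α₀ n = 1 := by
      have hub : (1 : ℝ) / alphaSeq α₀ n < 2 := by
        rw [div_lt_iff₀ h0]; linarith
      have hlb : (1 : ℝ) ≤ 1 / alphaSeq α₀ n := by
        rw [le_div_iff₀ h0]; linarith
      rw [aSeq]
      rw [Int.floor_eq_iff]
      constructor
      · push_cast; linarith
      · push_cast; linarith
    have := alphaSeq_succ α₀ n
    rw [this, ha1]
    push_cast
    field_simp
    nlinarith

lemma prod_two_bound (α₀ : ℝ) (hα : α₀ ∈ Set.Ioo (0 : ℝ) 1) (hirr : Irrational α₀) :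
    ∀ m, alphaProd α₀ (2 * m) ≤ (1 / 2 : ℝ) ^ m := by
  intro m
  induction m with
  | zero => simp [alphaProd]
  | succ m ih =>
    have e : 2 * (m + 1) = (2 * m + 1) + 1 := by ring
    have e2 : alphaProd α₀ (2 * (m + 1))
        = alphaProd α₀ (2 * m) * (alphaSeq α₀ (2 * m) * alphaSeq α₀ (2 * m + 1)) := by
      rw [e, alphaProd, Finset.prod_range_succ, Finset.prod_range_succ]
      rw [← alphaProd]; ring
    rw [e2, pow_succ]
    have hp := alphaProd_pos α₀ hα hirr (2 * m)
    have hpair := pair_bound α₀ hα hirr (2 * m)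
    have hnn : 0 ≤ alphaSeq α₀ (2 * m) * alphaSeq α₀ (2 * m + 1) :=
      mul_nonneg (le_of_lt (alpha_props α₀ hα hirr _).2.1) (le_of_lt (alpha_props α₀ hα hirr _).2.1)
    have h2 : (0:ℝ) ≤ (1/2:ℝ)^m := by positivity
    nlinarith

lemma alphaProd_tendsto (α₀ : ℝ) (hα : α₀ ∈ Set.Ioo (0 : ℝ) 1) (hirr : Irrational α₀) :
    Filter.Tendsto (alphaProd α₀) Filter.atTop (nhds 0) := by
  have tdiv : Filter.Tendsto (fun n : ℕ => n / 2) Filter.atTop Filter.atTop := by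
    apply Filter.tendsto_atTop_atTop.mpr
    intro b
    exact ⟨2 * b, fun a ha => (Nat.le_div_iff_mul_le (by norm_num)).mpr (by omega)⟩
  have T1 : Filter.Tendsto (fun n : ℕ => ((1:ℝ)/2) ^ (n / 2)) Filter.atTop (nhds 0) :=
    (tendsto_pow_atTop_nhds_zero_of_lt_one (by norm_num) (by norm_num)).comp tdiv
  apply squeeze_zero (fun n => le_of_lt (alphaProd_pos α₀ hα hirr n)) _ T1
  intro n
  calc alphaProd α₀ n ≤ alphaProd α₀ (2 * (n / 2)) :=
        alphaProd_anti α₀ hα hirr (by omega)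
    _ ≤ ((1:ℝ)/2) ^ (n / 2) := prod_two_bound α₀ hα hirr _


theorem stmt2 (α₀ β₀ : ℝ) (hα : α₀ ∈ Set.Ioo (0 : ℝ) 1) (hirr : Irrational α₀)
    (hβ : β₀ ∈ Set.Ico (-1 : ℝ) α₀) :
    (∀ n : ℕ,
      |β₀ - ∑ k ∈ Finset.range (n + 1), xSeq α₀ β₀ k| =
        alphaProd α₀ (n + 1) * |betaSeq α₀ β₀ (n + 1)|) ∧
    Filter.Tendsto (fun n : ℕ => ∑ k ∈ Finset.range (n + 1), xSeq α₀ β₀ k)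
      Filter.atTop (nhds β₀) := by
  have habs : ∀ n : ℕ,
      |β₀ - ∑ k ∈ Finset.range (n + 1), xSeq α₀ β₀ k| =
        alphaProd α₀ (n + 1) * |betaSeq α₀ β₀ (n + 1)| := by
    intro n
    rw [key_identity α₀ β₀ hα hirr hβ (n + 1), abs_mul, abs_mul, abs_pow, abs_neg, abs_one,
      one_pow, one_mul, abs_of_pos (alphaProd_pos α₀ hα hirr (n + 1))]
  refine ⟨habs, ?_⟩
  have hbound : ∀ n : ℕ,
      |β₀ - ∑ k ∈ Finset.range (n + 1), xSeq α₀ β₀ k| ≤ alphaProd α₀ (n + 1) := by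
    intro n
    rw [habs n]
    obtain ⟨hl, hu⟩ := beta_props α₀ β₀ hα hirr hβ (n + 1)
    have h1 := (alpha_props α₀ hα hirr (n + 1)).2.2
    have hb1 : |betaSeq α₀ β₀ (n + 1)| ≤ 1 := abs_le.mpr ⟨hl, by linarith⟩
    have hp := alphaProd_pos α₀ hα hirr (n + 1)
    nlinarith
  have hT : Filter.Tendsto (fun n : ℕ => alphaProd α₀ (n + 1)) Filter.atTop (nhds 0) :=
    (alphaProd_tendsto α₀ hα hirr).comp (Filter.tendsto_add_atTop_nat 1)
  have habs0 : Filter.Tendsto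
      (fun n : ℕ => |β₀ - ∑ k ∈ Finset.range (n + 1), xSeq α₀ β₀ k|)
      Filter.atTop (nhds 0) :=
    squeeze_zero (fun n => abs_nonneg _) hbound hT
  have hd : Filter.Tendsto
      (fun n : ℕ => β₀ - ∑ k ∈ Finset.range (n + 1), xSeq α₀ β₀ k)
      Filter.atTop (nhds 0) :=
    (tendsto_zero_iff_abs_tendsto_zero _).mpr habs0
  have := hd.const_sub β₀
  simpa using this
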